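/- arXiv:1502.03569 — 2 statements merged into one kernel-verified Lean document; each statement's English description precedes it below -/
import Mathlib

section
/- Let ρ(y) = e^{2cy}(1 + 2cy/(γσ))^{-γσ/2}(1+cy)^{-1} for fixed c > 0, σ > 1/2 and γ ≥ 1. Then for every integer 0 ≤ α ≤ 3 there is a constant C_α, independent of γ, such that |ρ^{(α)}(y)| ≤ C_α ρ(y) for all y ≥ 0. -/
noncomputable def rhoF (c b : ℝ) : ℝ → ℝ :=
  fun z => Real.exp (2 * c * z) * (1 + 2 * c * z / b) ^ (-(b / 2)) * (1 + c * z)⁻¹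

noncomputable def g1 (c b : ℝ) : ℝ → ℝ :=
  fun y => 2 * c - c * (1 + 2 * c * y / b)⁻¹ - c * (1 + c * y)⁻¹

lemma hasDerivAt_rhoF {c b y : ℝ} (hb : b ≠ 0) (hu : 0 < 1 + 2 * c * y / b)
    (hv : 0 < 1 + c * y) :
    HasDerivAt (rhoF c b) (g1 c b y * rhoF c b y) y := by
  have hA : HasDerivAt (fun z : ℝ => Real.exp (2 * c * z)) (Real.exp (2 * c * y) * (2 * c)) y := by
    simpa using ((hasDerivAt_id y).const_mul (2 * c)).exp
  have hu' : HasDerivAt (fun z : ℝ => 1 + 2 * c * z / b) (2 * c / b) y := by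
    simpa using ((((hasDerivAt_id y).const_mul (2 * c)).div_const b).const_add 1)
  have hB : HasDerivAt (fun z : ℝ => (1 + 2 * c * z / b) ^ (-(b / 2)))
      (2 * c / b * (-(b / 2)) * (1 + 2 * c * y / b) ^ (-(b / 2) - 1)) y :=
    hu'.rpow_const (Or.inl hu.ne')
  have hv' : HasDerivAt (fun z : ℝ => 1 + c * z) c y := by
    simpa using (((hasDerivAt_id y).const_mul c).const_add 1)
  have hH : HasDerivAt (fun z : ℝ => (1 + c * z)⁻¹) (-c / (1 + c * y) ^ 2) y :=
    hv'.inv hv.ne'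
  have h := (hA.mul hB).mul hH
  refine h.congr_deriv ?_
  symm
  have hpow : (1 + 2 * c * y / b) ^ (-(b / 2) - 1)
      = (1 + 2 * c * y / b) ^ (-(b / 2)) / (1 + 2 * c * y / b) := by
    rw [Real.rpow_sub hu, Real.rpow_one]
  have hb2 : 2 * c / b * (-(b / 2)) = -c := by field_simp
  rw [hpow, hb2]
  simp only [rhoF, g1, Pi.mul_apply]
  set U := 1 + 2 * c * y / b with hU
  set V := 1 + c * y with hV
  set E := Real.exp (2 * c * y) with hE
  set P := U ^ (-(b / 2)) with hP
  field_simp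
  ring

noncomputable def g2 (c b : ℝ) : ℝ → ℝ :=
  fun y => c * (2 * c / b) * ((1 + 2 * c * y / b)⁻¹) ^ 2 + c ^ 2 * ((1 + c * y)⁻¹) ^ 2

noncomputable def g3 (c b : ℝ) : ℝ → ℝ :=
  fun y => -(2 * c * (2 * c / b) ^ 2 * ((1 + 2 * c * y / b)⁻¹) ^ 3)
    - 2 * c ^ 3 * ((1 + c * y)⁻¹) ^ 3

lemma hasDerivAt_uinv {c b y : ℝ} (hu : 0 < 1 + 2 * c * y / b) :
    HasDerivAt (fun z : ℝ => (1 + 2 * c * z / b)⁻¹)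
      (-(2 * c / b) / (1 + 2 * c * y / b) ^ 2) y := by
  have hu' : HasDerivAt (fun z : ℝ => 1 + 2 * c * z / b) (2 * c / b) y := by
    simpa using ((((hasDerivAt_id y).const_mul (2 * c)).div_const b).const_add 1)
  exact hu'.inv hu.ne'

lemma hasDerivAt_vinv {c y : ℝ} (hv : 0 < 1 + c * y) :
    HasDerivAt (fun z : ℝ => (1 + c * z)⁻¹) (-c / (1 + c * y) ^ 2) y := by
  have hv' : HasDerivAt (fun z : ℝ => 1 + c * z) c y := by
    simpa using (((hasDerivAt_id y).const_mul c).const_add 1)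
  exact hv'.inv hv.ne'

lemma hasDerivAt_g1 {c b y : ℝ} (hu : 0 < 1 + 2 * c * y / b) (hv : 0 < 1 + c * y) :
    HasDerivAt (g1 c b) (g2 c b y) y := by
  have h := ((((hasDerivAt_uinv (c := c) (b := b) hu).const_mul c).const_sub (2 * c)).sub
    ((hasDerivAt_vinv (c := c) hv).const_mul c))
  refine h.congr_deriv ?_
  symm
  simp only [g2]
  field_simp [hu.ne', hv.ne']
  ring

lemma hasDerivAt_g2 {c b y : ℝ} (hu : 0 < 1 + 2 * c * y / b) (hv : 0 < 1 + c * y) :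
    HasDerivAt (g2 c b) (g3 c b y) y := by
  have h := ((((hasDerivAt_uinv (c := c) (b := b) hu).pow 2).const_mul (c * (2 * c / b))).add
    (((hasDerivAt_vinv (c := c) hv).pow 2).const_mul (c ^ 2)))
  refine h.congr_deriv ?_
  symm
  simp only [g3, Nat.cast_ofNat, Nat.reduceSub, pow_one]
  field_simp [hu.ne', hv.ne']
  ring

noncomputable def F1 (c b : ℝ) : ℝ → ℝ := fun y => g1 c b y * rhoF c b y
noncomputable def F2 (c b : ℝ) : ℝ → ℝ := fun y => (g2 c b y + g1 c b y ^ 2) * rhoF c b y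
noncomputable def F3 (c b : ℝ) : ℝ → ℝ :=
  fun y => (g3 c b y + 3 * g1 c b y * g2 c b y + g1 c b y ^ 3) * rhoF c b y

lemma hasDerivAt_F1 {c b y : ℝ} (hb : b ≠ 0) (hu : 0 < 1 + 2 * c * y / b)
    (hv : 0 < 1 + c * y) : HasDerivAt (F1 c b) (F2 c b y) y := by
  have h := (hasDerivAt_g1 hu hv).mul (hasDerivAt_rhoF hb hu hv)
  refine h.congr_deriv ?_
  symm
  simp only [F1, F2]; ring

lemma hasDerivAt_F2 {c b y : ℝ} (hb : b ≠ 0) (hu : 0 < 1 + 2 * c * y / b)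
    (hv : 0 < 1 + c * y) : HasDerivAt (F2 c b) (F3 c b y) y := by
  have h := ((hasDerivAt_g2 hu hv).add ((hasDerivAt_g1 hu hv).pow 2)).mul
    (hasDerivAt_rhoF hb hu hv)
  refine h.congr_deriv ?_
  symm
  simp only [F2, F3, Pi.add_apply, Pi.pow_apply]; ring

def Uset (c b : ℝ) : Set ℝ := {y | 0 < 1 + 2 * c * y / b} ∩ {y | 0 < 1 + c * y}

lemma isOpen_Uset (c b : ℝ) : IsOpen (Uset c b) := by
  refine IsOpen.inter (isOpen_lt continuous_const (by continuity))
    (isOpen_lt continuous_const (by continuity))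

lemma iter1 {c b : ℝ} (hb : b ≠ 0) {y : ℝ} (hy : y ∈ Uset c b) :
    iteratedDeriv 1 (rhoF c b) y = F1 c b y := by
  rw [iteratedDeriv_one]
  exact (hasDerivAt_rhoF hb hy.1 hy.2).deriv

lemma iter2 {c b : ℝ} (hb : b ≠ 0) {y : ℝ} (hy : y ∈ Uset c b) :
    iteratedDeriv 2 (rhoF c b) y = F2 c b y := by
  have hev : deriv (rhoF c b) =ᶠ[nhds y] F1 c b :=
    Filter.eventuallyEq_of_mem ((isOpen_Uset c b).mem_nhds hy)
      (fun z hz => (hasDerivAt_rhoF hb hz.1 hz.2).deriv)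
  rw [show (2 : ℕ) = 1 + 1 from rfl, iteratedDeriv_succ, iteratedDeriv_one,
    hev.deriv_eq]
  exact (hasDerivAt_F1 hb hy.1 hy.2).deriv

lemma iter3 {c b : ℝ} (hb : b ≠ 0) {y : ℝ} (hy : y ∈ Uset c b) :
    iteratedDeriv 3 (rhoF c b) y = F3 c b y := by
  have hev : iteratedDeriv 2 (rhoF c b) =ᶠ[nhds y] F2 c b :=
    Filter.eventuallyEq_of_mem ((isOpen_Uset c b).mem_nhds hy)
      (fun z hz => iter2 hb hz)
  rw [show (3 : ℕ) = 2 + 1 from rfl, iteratedDeriv_succ, hev.deriv_eq]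
  exact (hasDerivAt_F2 hb hy.1 hy.2).deriv

lemma rhoF_pos {c b y : ℝ} (hu : 0 < 1 + 2 * c * y / b) (hv : 0 < 1 + c * y) :
    0 < rhoF c b y :=
  mul_pos (mul_pos (Real.exp_pos _) (Real.rpow_pos_of_pos hu _)) (inv_pos.mpr hv)


set_option maxHeartbeats 1000000 in
lemma aux_bounds {c a iu iv : ℝ} (hc : 0 < c) (ha0 : 0 ≤ a) (ha4 : a ≤ 4 * c)
    (hiu0 : 0 ≤ iu) (hiu1 : iu ≤ 1) (hiv0 : 0 ≤ iv) (hiv1 : iv ≤ 1) :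
    |2 * c - c * iu - c * iv| ≤ 2 * c ∧ |c * a * iu ^ 2 + c ^ 2 * iv ^ 2| ≤ 5 * c ^ 2 ∧
      |-(2 * c * a ^ 2 * iu ^ 3) - 2 * c ^ 3 * iv ^ 3| ≤ 34 * c ^ 3 := by
  have hiu2 : iu ^ 2 ≤ 1 := pow_le_one₀ hiu0 hiu1
  have hiu3 : iu ^ 3 ≤ 1 := pow_le_one₀ hiu0 hiu1
  have hiv2 : iv ^ 2 ≤ 1 := pow_le_one₀ hiv0 hiv1
  have hiv3 : iv ^ 3 ≤ 1 := pow_le_one₀ hiv0 hiv1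
  have hiu2' : 0 ≤ iu ^ 2 := by positivity
  have hiu3' : 0 ≤ iu ^ 3 := by positivity
  have hiv2' : 0 ≤ iv ^ 2 := by positivity
  have hiv3' : 0 ≤ iv ^ 3 := by positivity
  have ha2 : a ^ 2 ≤ 16 * c ^ 2 := by nlinarith
  have h1 : a * iu ^ 2 ≤ 4 * c := by nlinarith [mul_le_mul_of_nonneg_left hiu2 ha0]
  have h2 : a ^ 2 * iu ^ 3 ≤ 16 * c ^ 2 := by nlinarith [mul_le_mul_of_nonneg_left hiu3 (sq_nonneg a)]
  have h2' : 0 ≤ a ^ 2 * iu ^ 3 := by positivity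
  have h1' : 0 ≤ a * iu ^ 2 := by positivity
  have hc3 : (0:ℝ) ≤ c ^ 3 := by positivity
  have k1 : c * (a ^ 2 * iu ^ 3) ≤ c * (16 * c ^ 2) := mul_le_mul_of_nonneg_left h2 hc.le
  have k2 : 0 ≤ c * (a ^ 2 * iu ^ 3) := mul_nonneg hc.le h2'
  have k3 : 0 ≤ c ^ 3 * iv ^ 3 := mul_nonneg hc3 hiv3'
  have k4 : c ^ 3 * iv ^ 3 ≤ c ^ 3 * 1 := mul_le_mul_of_nonneg_left hiv3 hc3
  refine ⟨abs_le.mpr ⟨by nlinarith, by nlinarith⟩,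
    abs_le.mpr ⟨by nlinarith, by nlinarith⟩,
    abs_le.mpr ⟨by nlinarith, by nlinarith⟩⟩
lemma g_bounds {c b y : ℝ} (hc : 0 < c) (hb : 1 / 2 ≤ b) (hy : 0 ≤ y) :
    |g1 c b y| ≤ 2 * c ∧ |g2 c b y| ≤ 5 * c ^ 2 ∧ |g3 c b y| ≤ 34 * c ^ 3 := by
  have hb0 : 0 < b := lt_of_lt_of_le (by norm_num) hb
  have hu1 : 1 ≤ 1 + 2 * c * y / b := by
    have : 0 ≤ 2 * c * y / b := by positivity
    linarith
  have hv1 : 1 ≤ 1 + c * y := by nlinarith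
  have hiu0 : 0 ≤ (1 + 2 * c * y / b)⁻¹ := inv_nonneg.mpr (by linarith)
  have hiv0 : 0 ≤ (1 + c * y)⁻¹ := inv_nonneg.mpr (by linarith)
  have hiu1 : (1 + 2 * c * y / b)⁻¹ ≤ 1 := by
    rw [inv_le_one_iff₀]; right; exact hu1
  have hiv1 : (1 + c * y)⁻¹ ≤ 1 := by
    rw [inv_le_one_iff₀]; right; exact hv1
  have ha0 : 0 ≤ 2 * c / b := by positivity
  have ha4 : 2 * c / b ≤ 4 * c := by
    rw [div_le_iff₀ hb0]; nlinarith
  exact aux_bounds hc ha0 ha4 hiu0 hiu1 hiv0 hiv1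

/-- Let `ρ(y) = e^{2cy}(1 + 2cy/(γσ))^{-γσ/2}(1+cy)⁻¹` with `c > 0`, `σ > 1/2`, `γ ≥ 1`.
Then for every integer `0 ≤ α ≤ 3` there is a constant `C_α`, independent of `γ`, such that
`|ρ^{(α)}(y)| ≤ C_α ρ(y)` for all `y ≥ 0`. -/
theorem stmt_7 (c σ : ℝ) (hc : 0 < c) (hσ : 1 / 2 < σ) :
    ∀ α : ℕ, α ≤ 3 → ∃ C > 0, ∀ γ : ℝ, 1 ≤ γ → ∀ y : ℝ, 0 ≤ y →
      |iteratedDeriv α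
          (fun z => Real.exp (2 * c * z) * (1 + 2 * c * z / (γ * σ)) ^ (-(γ * σ / 2)) *
            (1 + c * z)⁻¹) y| ≤
        C * (Real.exp (2 * c * y) * (1 + 2 * c * y / (γ * σ)) ^ (-(γ * σ / 2)) *
          (1 + c * y)⁻¹) := by
  intro α hα
  have key : ∀ C : ℝ, 0 < C →
      (∀ b y : ℝ, 1 / 2 ≤ b → 0 ≤ y → |iteratedDeriv α (rhoF c b) y| ≤ C * rhoF c b y) →
      ∃ C > 0, ∀ γ : ℝ, 1 ≤ γ → ∀ y : ℝ, 0 ≤ y →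
      |iteratedDeriv α
          (fun z => Real.exp (2 * c * z) * (1 + 2 * c * z / (γ * σ)) ^ (-(γ * σ / 2)) *
            (1 + c * z)⁻¹) y| ≤
        C * (Real.exp (2 * c * y) * (1 + 2 * c * y / (γ * σ)) ^ (-(γ * σ / 2)) *
          (1 + c * y)⁻¹) := by
    intro C hC h
    refine ⟨C, hC, fun γ hγ y hy => ?_⟩
    have hb : 1 / 2 ≤ γ * σ := by nlinarith
    exact h (γ * σ) y hb hy
  -- basic facts used in all cases
  have fact : ∀ b y : ℝ, 1 / 2 ≤ b → 0 ≤ y →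
      (0 < b) ∧ (0 < 1 + 2 * c * y / b) ∧ (0 < 1 + c * y) ∧ y ∈ Uset c b := by
    intro b y hb hy
    have hb0 : 0 < b := lt_of_lt_of_le (by norm_num) hb
    have hu : 0 < 1 + 2 * c * y / b := by positivity
    have hv : 0 < 1 + c * y := by positivity
    exact ⟨hb0, hu, hv, ⟨hu, hv⟩⟩
  interval_cases α
  · refine key 1 one_pos ?_
    intro b y hb hy
    obtain ⟨hb0, hu, hv, _⟩ := fact b y hb hy
    rw [iteratedDeriv_zero, abs_of_pos (rhoF_pos hu hv), one_mul]
  · refine key (2 * c) (by positivity) ?_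
    intro b y hb hy
    obtain ⟨hb0, hu, hv, hyU⟩ := fact b y hb hy
    rw [iter1 hb0.ne' hyU]
    have hρ := rhoF_pos hu hv
    calc |F1 c b y| = |g1 c b y| * rhoF c b y := by
          rw [F1, abs_mul, abs_of_pos hρ]
      _ ≤ 2 * c * rhoF c b y :=
          mul_le_mul_of_nonneg_right (g_bounds hc hb hy).1 hρ.le
  · refine key (9 * c ^ 2) (by positivity) ?_
    intro b y hb hy
    obtain ⟨hb0, hu, hv, hyU⟩ := fact b y hb hy
    rw [iter2 hb0.ne' hyU]
    have hρ := rhoF_pos hu hv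
    obtain ⟨h1, h2, h3⟩ := g_bounds hc hb hy
    calc |F2 c b y| = |g2 c b y + g1 c b y ^ 2| * rhoF c b y := by
          rw [F2, abs_mul, abs_of_pos hρ]
      _ ≤ 9 * c ^ 2 * rhoF c b y := by
          refine mul_le_mul_of_nonneg_right ?_ hρ.le
          have := abs_le.mp h1
          have h1sq : |g1 c b y ^ 2| ≤ 4 * c ^ 2 := by
            rw [abs_pow]
            calc |g1 c b y| ^ 2 ≤ (2 * c) ^ 2 := pow_le_pow_left₀ (abs_nonneg _) h1 2
              _ = 4 * c ^ 2 := by ring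
          calc |g2 c b y + g1 c b y ^ 2| ≤ |g2 c b y| + |g1 c b y ^ 2| := abs_add_le _ _
            _ ≤ 5 * c ^ 2 + 4 * c ^ 2 := add_le_add h2 h1sq
            _ = 9 * c ^ 2 := by ring
  · refine key (72 * c ^ 3) (by positivity) ?_
    intro b y hb hy
    obtain ⟨hb0, hu, hv, hyU⟩ := fact b y hb hy
    rw [iter3 hb0.ne' hyU]
    have hρ := rhoF_pos hu hv
    obtain ⟨h1, h2, h3⟩ := g_bounds hc hb hy
    calc |F3 c b y|
        = |g3 c b y + 3 * g1 c b y * g2 c b y + g1 c b y ^ 3| * rhoF c b y := by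
          rw [F3, abs_mul, abs_of_pos hρ]
      _ ≤ 72 * c ^ 3 * rhoF c b y := by
          refine mul_le_mul_of_nonneg_right ?_ hρ.le
          have hmid : |3 * g1 c b y * g2 c b y| ≤ 30 * c ^ 3 := by
            rw [abs_mul, abs_mul]
            have h30 : |(3:ℝ)| = 3 := by norm_num
            rw [h30]
            nlinarith [mul_le_mul h1 h2 (abs_nonneg _) (by positivity : (0:ℝ) ≤ 2 * c),
              abs_nonneg (g1 c b y), abs_nonneg (g2 c b y)]
          have hcube : |g1 c b y ^ 3| ≤ 8 * c ^ 3 := by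
            rw [abs_pow]
            calc |g1 c b y| ^ 3 ≤ (2 * c) ^ 3 := pow_le_pow_left₀ (abs_nonneg _) h1 3
              _ = 8 * c ^ 3 := by ring
          calc |g3 c b y + 3 * g1 c b y * g2 c b y + g1 c b y ^ 3|
              ≤ |g3 c b y + 3 * g1 c b y * g2 c b y| + |g1 c b y ^ 3| := abs_add_le _ _
            _ ≤ (|g3 c b y| + |3 * g1 c b y * g2 c b y|) + |g1 c b y ^ 3| :=
                add_le_add_left (abs_add_le _ _) _
            _ ≤ (34 * c ^ 3 + 30 * c ^ 3) + 8 * c ^ 3 := by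
                exact add_le_add (add_le_add h3 hmid) hcube
            _ = 72 * c ^ 3 := by ring
end

section
/- Let σ > 1/2 and s = 3(1+σ). There is a constant C > 0 (depending only on s) such that for every integer m ≥ 8, ∑_{j=4}^{⌊m/2⌋} (m!/(j!(m-j)!)) · ((j-2)!)^{s} · ((m-j-5)!)^{s} ≤ C · ((m-5)!)^{s}. -/
open Nat Finset

lemma key_nat (m j : ℕ) (hm : 8 ≤ m) (hj4 : 4 ≤ j) (hjm : j ≤ m / 2) :
    m * m.choose j * ((j - 2)! * (m - j - 5)!) ^ 3 ≤ 100000000 * ((m - 5)!) ^ 3 := by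
  rcases lt_or_ge m 10 with h10 | h10
  · have hj : j = 4 := by omega
    subst hj
    have hm89 : m = 8 ∨ m = 9 := by omega
    rcases hm89 with rfl | rfl <;> decide
  · have hjm' : j ≤ m := by omega
    have hj2 : (2:ℕ) ≤ j := by omega
    have h5mj : (5:ℕ) ≤ m - j := by omega
    have h7m : (7:ℕ) ≤ m := by omega
    have hj2m7 : j - 2 ≤ m - 7 := by omega
    set a := (j - 2)! with ha
    set b := (m - j - 5)! with hb
    set Q := (m - 7).choose (j - 2) with hQdef
    have hQ : a * b * Q = (m - 7)! := by
      have h := Nat.choose_mul_factorial_mul_factorial hj2m7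
      have e : m - 7 - (j - 2) = m - j - 5 := by omega
      rw [e] at h
      rw [← h]; ring
    have hfj : j ! = j.descFactorial 2 * a := by
      have h := Nat.factorial_mul_descFactorial hj2
      rw [← h]; ring
    have hfmj : (m - j)! = (m - j).descFactorial 5 * b := by
      have h := Nat.factorial_mul_descFactorial h5mj
      rw [← h]; ring
    have hfm : m ! = m.descFactorial 7 * (m - 7)! := by
      have h := Nat.factorial_mul_descFactorial h7m
      rw [← h]; ring
    have hfm5 : (m - 5)! = (m - 5).descFactorial 2 * (m - 7)! := by
      have h2m5 : (2:ℕ) ≤ m - 5 := by omega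
      have h := Nat.factorial_mul_descFactorial h2m5
      have e : m - 5 - 2 = m - 7 := by omega
      rw [e] at h
      rw [← h]; ring
    have hC := Nat.choose_mul_factorial_mul_factorial hjm'
    have E2 : m.choose j * (j.descFactorial 2 * (m - j).descFactorial 5)
        = m.descFactorial 7 * Q := by
      have hab : 0 < a * b := Nat.mul_pos (Nat.factorial_pos _) (Nat.factorial_pos _)
      apply Nat.eq_of_mul_eq_mul_right hab
      calc m.choose j * (j.descFactorial 2 * (m - j).descFactorial 5) * (a * b)
          = m.choose j * (j.descFactorial 2 * a) * ((m - j).descFactorial 5 * b) := by ring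
        _ = m.choose j * j ! * (m - j)! := by rw [hfj, hfmj]
        _ = m ! := hC
        _ = m.descFactorial 7 * (m - 7)! := hfm
        _ = m.descFactorial 7 * (a * b * Q) := by rw [hQ]
        _ = m.descFactorial 7 * Q * (a * b) := by ring
    have hQ1 : 1 ≤ Q := Nat.choose_pos hj2m7
    set x := m - j - 4 with hx
    have hx1 : 1 ≤ x := by omega
    have hx10 : m ≤ 10 * x := by omega
    have hxw : x ^ 5 ≤ (m - j).descFactorial 5 := by
      have h := Nat.pow_sub_le_descFactorial (m - j) 5
      have e : m - j + 1 - 5 = x := by omega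
      rwa [e] at h
    have hd2 : 1 ≤ j.descFactorial 2 := by
      have h := Nat.pow_sub_le_descFactorial j 2
      have : 1 ≤ (j + 1 - 2) ^ 2 := Nat.one_le_pow _ _ (by omega)
      omega
    have hP7 : m.descFactorial 7 ≤ m ^ 7 := Nat.descFactorial_le_pow m 7
    set d := (m - 5).descFactorial 2 with hd
    have hd1 : 1 ≤ d := by
      have h := Nat.pow_sub_le_descFactorial (m - 5) 2
      have : 1 ≤ (m - 5 + 1 - 2) ^ 2 := Nat.one_le_pow _ _ (by omega)
      omega
    have hde : d = (m - 5 - 1) * (m - 5) := by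
      rw [hd, Nat.descFactorial_succ, Nat.descFactorial_one]
    have hm6 : m * m ≤ 6 * d := by
      rw [hde]
      have h2 : m ≤ 2 * (m - 5) := by omega
      have h3 : m ≤ 3 * (m - 5 - 1) := by omega
      calc m * m ≤ (3 * (m - 5 - 1)) * (2 * (m - 5)) := Nat.mul_le_mul h3 h2
        _ = 6 * ((m - 5 - 1) * (m - 5)) := by ring
    -- numeric core: m ^ 8 ≤ 21600000 * d ^ 3 * x ^ 5
    have hnum : m ^ 8 ≤ 21600000 * d ^ 3 * x ^ 5 := by
      have h1 : m ^ 8 ≤ m ^ 11 := Nat.pow_le_pow_right (by omega) (by norm_num)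
      have h2 : m ^ 11 = (m * m) ^ 3 * m ^ 5 := by ring
      have h3 : (m * m) ^ 3 ≤ (6 * d) ^ 3 := Nat.pow_le_pow_left hm6 3
      have h4 : m ^ 5 ≤ (10 * x) ^ 5 := Nat.pow_le_pow_left hx10 5
      calc m ^ 8 ≤ (m * m) ^ 3 * m ^ 5 := by rw [← h2]; exact h1
        _ ≤ (6 * d) ^ 3 * (10 * x) ^ 5 := Nat.mul_le_mul h3 h4
        _ = 21600000 * d ^ 3 * x ^ 5 := by ring
    -- main chain
    have S : m * m.choose j ≤ 100000000 * d ^ 3 * Q ^ 3 := by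
      have step : m * m.choose j * x ^ 5 ≤ 21600000 * d ^ 3 * Q * x ^ 5 := by
        calc m * m.choose j * x ^ 5
            = m * (m.choose j * (1 * x ^ 5)) := by ring
          _ ≤ m * (m.choose j * (j.descFactorial 2 * (m - j).descFactorial 5)) := by
              exact Nat.mul_le_mul_left m (Nat.mul_le_mul_left _ (Nat.mul_le_mul hd2 hxw))
          _ = m * (m.descFactorial 7 * Q) := by rw [E2]
          _ ≤ m * (m ^ 7 * Q) := Nat.mul_le_mul_left m (Nat.mul_le_mul_right Q hP7)
          _ = m ^ 8 * Q := by ring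
          _ ≤ (21600000 * d ^ 3 * x ^ 5) * Q := Nat.mul_le_mul_right Q hnum
          _ = 21600000 * d ^ 3 * Q * x ^ 5 := by ring
      have hxpos : 0 < x ^ 5 := Nat.pow_pos (by omega)
      have base := Nat.le_of_mul_le_mul_right step hxpos
      have hQ3 : Q ≤ Q ^ 3 := Nat.le_self_pow (by norm_num) Q
      calc m * m.choose j ≤ 21600000 * d ^ 3 * Q := base
        _ ≤ 21600000 * d ^ 3 * Q ^ 3 := Nat.mul_le_mul_left _ hQ3
        _ ≤ 100000000 * d ^ 3 * Q ^ 3 := by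
            apply Nat.mul_le_mul_right
            apply Nat.mul_le_mul_right
            norm_num
    calc m * m.choose j * (a * b) ^ 3
        ≤ (100000000 * d ^ 3 * Q ^ 3) * (a * b) ^ 3 := Nat.mul_le_mul_right _ S
      _ = 100000000 * (d * (a * b * Q)) ^ 3 := by ring
      _ = 100000000 * ((m - 5)!) ^ 3 := by rw [hQ, ← hfm5]

lemma ab_le_B (m j : ℕ) (hm : 8 ≤ m) (hj4 : 4 ≤ j) (hjm : j ≤ m / 2) :
    (j - 2)! * (m - j - 5)! ≤ (m - 5)! := by
  have h1 : (j - 2)! * (m - j - 5)! ∣ ((j - 2) + (m - j - 5))! :=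
    Nat.factorial_mul_factorial_dvd_factorial_add _ _
  have h2 : (j - 2) + (m - j - 5) ≤ m - 5 := by omega
  exact le_trans (Nat.le_of_dvd (Nat.factorial_pos _) h1) (Nat.factorial_le h2)

/-- Factorial summation estimate: with `s = 3(1+σ)`, `σ > 1/2`, there is `C > 0` such that for
all `m ≥ 8`, `∑_{j=4}^{⌊m/2⌋} (m!/(j!(m-j)!)) ((j-2)!)^s ((m-j-5)!)^s ≤ C ((m-5)!)^s`. -/
theorem stmt_17 (σ : ℝ) (hσ : 1 / 2 < σ) :
    ∃ C > 0, ∀ m : ℕ, 8 ≤ m →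
      ∑ j ∈ Finset.Icc 4 (m / 2),
          (m.choose j : ℝ) * ((j - 2)! : ℝ) ^ (3 * (1 + σ)) *
            ((m - j - 5)! : ℝ) ^ (3 * (1 + σ)) ≤
        C * ((m - 5)! : ℝ) ^ (3 * (1 + σ)) := by
  refine ⟨100000000, by norm_num, ?_⟩
  intro m hm
  set s : ℝ := 3 * (1 + σ) with hs
  have hs3 : (3:ℝ) ≤ s := by rw [hs]; nlinarith
  have hmpos : (0:ℝ) < m := by positivity
  set B : ℝ := ((m - 5)! : ℝ) with hB
  have hB1 : (1:ℝ) ≤ B := by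
    rw [hB]
    have : (1:ℕ) ≤ (m - 5)! := Nat.factorial_pos _
    exact_mod_cast this
  have hBs_nonneg : 0 ≤ B ^ s := Real.rpow_nonneg (by linarith) s
  have hsplit : ∀ c : ℝ, 1 ≤ c → c ^ s = c ^ (3:ℕ) * c ^ (s - 3) := by
    intro c hc
    rw [← Real.rpow_natCast c 3, ← Real.rpow_add (by linarith)]
    norm_num
  have hterm : ∀ j ∈ Finset.Icc 4 (m / 2),
      (m.choose j : ℝ) * ((j - 2)! : ℝ) ^ s * ((m - j - 5)! : ℝ) ^ s ≤
        (100000000 / m) * B ^ s := by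
    intro j hj
    obtain ⟨hj4, hjm⟩ := Finset.mem_Icc.mp hj
    set a : ℝ := ((j - 2)! : ℝ) with ha
    set b : ℝ := ((m - j - 5)! : ℝ) with hb
    have ha1 : (1:ℝ) ≤ a := by
      rw [ha]
      have : (1:ℕ) ≤ (j - 2)! := Nat.factorial_pos _
      exact_mod_cast this
    have hb1 : (1:ℝ) ≤ b := by
      rw [hb]
      have : (1:ℕ) ≤ (m - j - 5)! := Nat.factorial_pos _
      exact_mod_cast this
    have hab1 : (1:ℝ) ≤ a * b := one_le_mul_of_one_le_of_one_le ha1 hb1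
    have habB : a * b ≤ B := by
      have := ab_le_B m j hm hj4 hjm
      rw [ha, hb, hB]
      exact_mod_cast this
    have hkey : (m:ℝ) * (m.choose j : ℝ) * (a * b) ^ (3:ℕ) ≤ 100000000 * B ^ (3:ℕ) := by
      have := key_nat m j hm hj4 hjm
      rw [ha, hb, hB]
      exact_mod_cast this
    have hchoose_nonneg : (0:ℝ) ≤ (m.choose j : ℝ) := by positivity
    calc (m.choose j : ℝ) * a ^ s * b ^ s
        = (m.choose j : ℝ) * (a * b) ^ s := by
          rw [Real.mul_rpow (by linarith) (by linarith)]; ring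
      _ = (m.choose j : ℝ) * ((a * b) ^ (3:ℕ) * (a * b) ^ (s - 3)) := by
          rw [hsplit (a * b) hab1]
      _ ≤ (m.choose j : ℝ) * ((a * b) ^ (3:ℕ) * B ^ (s - 3)) := by
          apply mul_le_mul_of_nonneg_left _ hchoose_nonneg
          apply mul_le_mul_of_nonneg_left _ (by positivity)
          exact Real.rpow_le_rpow (by linarith) habB (by linarith)
      _ = ((m.choose j : ℝ) * (a * b) ^ (3:ℕ)) * B ^ (s - 3) := by ring
      _ ≤ (100000000 / m * B ^ (3:ℕ)) * B ^ (s - 3) := by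
          apply mul_le_mul_of_nonneg_right _ (Real.rpow_nonneg (by linarith) _)
          rw [div_mul_eq_mul_div, le_div_iff₀ hmpos]
          calc (m.choose j : ℝ) * (a * b) ^ (3:ℕ) * m
              = (m:ℝ) * (m.choose j : ℝ) * (a * b) ^ (3:ℕ) := by ring
            _ ≤ 100000000 * B ^ (3:ℕ) := hkey
      _ = 100000000 / m * B ^ s := by rw [hsplit B hB1]; ring
  calc ∑ j ∈ Finset.Icc 4 (m / 2),
        (m.choose j : ℝ) * ((j - 2)! : ℝ) ^ s * ((m - j - 5)! : ℝ) ^ s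
      ≤ ∑ _j ∈ Finset.Icc 4 (m / 2), (100000000 / m) * B ^ s :=
        Finset.sum_le_sum hterm
    _ = ((Finset.Icc 4 (m / 2)).card : ℝ) * ((100000000 / m) * B ^ s) := by
        rw [Finset.sum_const, nsmul_eq_mul]
    _ ≤ (m:ℝ) * ((100000000 / m) * B ^ s) := by
        apply mul_le_mul_of_nonneg_right _ (by positivity)
        have : (Finset.Icc 4 (m / 2)).card ≤ m := by
          rw [Nat.card_Icc]; omega
        exact_mod_cast this
    _ = 100000000 * B ^ s := by
        field_simp
end
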